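/- arXiv:1102.2629 — 3 statements merged into one kernel-verified Lean document; each statement's English description precedes it below -/
import Mathlib

section
/- Every nilpotent restricted derivation of a three-dimensional restricted Heisenberg algebra over a field of characteristic two is inner. More precisely, let F be a field of characteristic 2, let L = h_1(F) = Fx + Fy + Fz with [x,y] = z central, equipped with any p-mapping making L a restricted Lie algebra; then every restricted derivation D of L satisfying D^n = 0 for some positive integer n is of the form ad_L(a) for some a ∈ L. -/
open UniversalEnvelopingAlgebra

/-- A restricted Lie algebra structure (`p`-mapping) on a Lie algebra `L` over `F`.
The requirement that the `p`-mapping satisfies Jacobson's formula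
`(x+y)^{[p]} = x^{[p]} + y^{[p]} + ∑ᵢ sᵢ(x,y)` is encoded inside the universal enveloping
algebra, where `∑ᵢ sᵢ(x,y) = (ι x + ι y)^p - (ι x)^p - (ι y)^p`. -/
structure PMapping (p : ℕ) (F L : Type*) [CommRing F] [LieRing L] [LieAlgebra F L] where
  pow : L → L
  ad_pow : ∀ x : L, LieAlgebra.ad F L (pow x) = LieAlgebra.ad F L x ^ p
  smul_pow : ∀ (a : F) (x : L), pow (a • x) = a ^ p • pow x
  jacobson : ∀ x y : L,
    ι F (pow (x + y)) =
      ι F (pow x) + ι F (pow y) +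
        ((ι F x + ι F y) ^ p - (ι F x : UniversalEnvelopingAlgebra F L) ^ p - ι F y ^ p)

namespace PMapping

variable {p : ℕ} {F L : Type*} [CommRing F] [LieRing L] [LieAlgebra F L]

/-- A derivation `D` of `(L, [p])` is restricted if `D(x^{[p]}) = (ad x)^{p-1}(D x)`. -/
def IsRestrictedDer (P : PMapping p F L) (D : LieDerivation F L L) : Prop :=
  ∀ x : L, D (P.pow x) = ((LieAlgebra.ad F L x) ^ (p - 1)) (D x)

/-- A derivation is inner if it is of the form `ad_L(a)` for some `a ∈ L`. -/
def IsInnerDer (D : LieDerivation F L L) : Prop :=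
  ∃ a : L, ∀ x : L, D x = ⁅a, x⁆

/-- Membership in the `p`-subalgebra generated by a set `s`: `x` lies in every Lie
subalgebra that contains `s` and is closed under the `p`-mapping. -/
def MemPSpan (P : PMapping p F L) (s : Set L) (x : L) : Prop :=
  ∀ K : LieSubalgebra F L, s ⊆ ↑K → (∀ y ∈ K, P.pow y ∈ K) → x ∈ K

/-- An element `x` is semisimple if it lies in the `p`-subalgebra generated by `x^{[p]}`. -/
def IsSemisimpleElt (P : PMapping p F L) (x : L) : Prop :=
  P.MemPSpan {P.pow x} x

/-- A restricted Lie algebra is a torus if all of its elements are semisimple. -/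
def IsTorus (P : PMapping p F L) : Prop :=
  ∀ x : L, P.IsSemisimpleElt x

/-- A `p`-ideal is a Lie ideal closed under the `p`-mapping. -/
def IsPIdeal (P : PMapping p F L) (I : LieIdeal F L) : Prop :=
  ∀ x ∈ I, P.pow x ∈ I

end PMapping

/-- `L` is isomorphic, as an ordinary Lie algebra, to the three-dimensional Heisenberg
algebra `h₁(F)`: it has a basis `x, y, z` with `⁅x,y⁆ = z` and `z` central. -/
def IsHeisenberg3 (F L : Type*) [CommRing F] [LieRing L] [LieAlgebra F L] : Prop :=
  ∃ b : Module.Basis (Fin 3) F L, ⁅b 0, b 1⁆ = b 2 ∧ ⁅b 0, b 2⁆ = 0 ∧ ⁅b 1, b 2⁆ = 0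

/-- **Proposition.** Every nilpotent restricted derivation of a three-dimensional restricted
Heisenberg algebra over a field of characteristic two is inner. -/
theorem nilpotent_restricted_derivation_of_heisenberg_isInner
    (F L : Type*) [Field F] [CharP F 2]
    [LieRing L] [LieAlgebra F L] (b : Module.Basis (Fin 3) F L)
    (hxy : ⁅b 0, b 1⁆ = b 2) (hxz : ⁅b 0, b 2⁆ = 0) (hyz : ⁅b 1, b 2⁆ = 0)
    (P : PMapping 2 F L) (D : LieDerivation F L L) (hD : P.IsRestrictedDer D)
    (hnil : ∃ n : ℕ, 0 < n ∧ D.toLinearMap ^ n = 0) :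
    PMapping.IsInnerDer D := by
  classical
  obtain ⟨n, hn, hDn⟩ := hnil
  have hyx : ⁅b 1, b 0⁆ = -(b 2) := by rw [← hxy, ← lie_skew]
  -- helper: equality of multiples of b 2
  have hb2z : ∀ s : F, s • b 2 = 0 → s = 0 := by
    intro s h
    rcases smul_eq_zero.mp h with h' | h'
    · exact h'
    · exact absurd h' (b.ne_zero 2)
  have hb2 : ∀ s t : F, s • b 2 = t • b 2 → s = t := by
    intro s t h
    have : (s - t) • b 2 = 0 := by rw [sub_smul, h, sub_self]
    exact sub_eq_zero.mp (hb2z _ this)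
  set a := b.repr (D (b 0)) 0 with ha
  set c := b.repr (D (b 0)) 1 with hc
  set e := b.repr (D (b 0)) 2 with he
  set a' := b.repr (D (b 1)) 0 with ha'
  set d := b.repr (D (b 1)) 1 with hd
  set f := b.repr (D (b 1)) 2 with hf
  have hD0 : D (b 0) = a • b 0 + c • b 1 + e • b 2 := by
    conv_lhs => rw [← b.sum_repr (D (b 0))]
    rw [Fin.sum_univ_three]
  have hD1 : D (b 1) = a' • b 0 + d • b 1 + f • b 2 := by
    conv_lhs => rw [← b.sum_repr (D (b 1))]
    rw [Fin.sum_univ_three]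
  have hzx : ⁅b 2, b 0⁆ = 0 := by rw [← lie_skew, hxz, neg_zero]
  have hzy : ⁅b 2, b 1⁆ = 0 := by rw [← lie_skew, hyz, neg_zero]
  have hD2 : D (b 2) = (a + d) • b 2 := by
    have h := D.apply_lie_eq_add (b 0) (b 1)
    rw [hxy, hD0, hD1] at h
    rw [h]
    simp only [add_lie, lie_add, smul_lie, lie_smul, hxy, hyx, hxz, hyz, hzx, hzy, lie_self,
      smul_zero, smul_neg, add_zero, zero_add, add_smul]
    module
  -- p-th powers of b 0 and b 1 are multiples of b 2
  have hpow : ∀ i : Fin 3, ⁅b i, ⁅b i, b 1⁆⁆ = 0 → ⁅b i, ⁅b i, b 0⁆⁆ = 0 →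
      ∃ g : F, P.pow (b i) = g • b 2 := by
    intro i hbi1 hbi0
    have hsq : ∀ v : L, ⁅P.pow (b i), v⁆ = ⁅b i, ⁅b i, v⁆⁆ := by
      intro v
      have := LinearMap.congr_fun (P.ad_pow (b i)) v
      rwa [sq, Module.End.mul_apply, LieAlgebra.ad_apply, LieAlgebra.ad_apply,
        LieAlgebra.ad_apply] at this
    have hrep : P.pow (b i) = (b.repr (P.pow (b i))) 0 • b 0 + (b.repr (P.pow (b i))) 1 • b 1
        + (b.repr (P.pow (b i))) 2 • b 2 := by
      conv_lhs => rw [← b.sum_repr (P.pow (b i))]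
      rw [Fin.sum_univ_three]
    have h0 : ⁅P.pow (b i), b 1⁆ = 0 := by rw [hsq, hbi1]
    have h1 : ⁅P.pow (b i), b 0⁆ = 0 := by rw [hsq, hbi0]
    rw [hrep] at h0 h1
    simp only [add_lie, smul_lie, hxy, hyx, lie_self, hzx, hzy,
      smul_zero, smul_neg, add_zero, zero_add] at h0 h1
    have hA : (b.repr (P.pow (b i))) 0 = 0 := hb2z _ h0
    have hB : (b.repr (P.pow (b i))) 1 = 0 :=
      neg_eq_zero.mp (hb2z _ (by rw [neg_smul]; exact h1))
    refine ⟨(b.repr (P.pow (b i))) 2, ?_⟩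
    conv_lhs => rw [hrep]
    rw [hA, hB, zero_smul, zero_smul, zero_add, zero_add]
  obtain ⟨g0, hpow0⟩ := hpow 0 (by rw [hxy]; exact hxz) (by rw [lie_self, lie_zero])
  obtain ⟨g1, hpow1⟩ := hpow 1 (by rw [lie_self, lie_zero]) (by rw [hyx, lie_neg, hyz, neg_zero])
  -- restrictedness at b 0 and b 1
  have hres0 : (g0 * (a + d)) • b 2 = c • b 2 := by
    have h := hD (b 0)
    rw [hpow0, pow_one, LieAlgebra.ad_apply, hD0, map_smul, hD2] at h
    rw [smul_smul] at h
    rw [h]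
    simp only [lie_add, lie_smul, lie_self, hxy, hxz, smul_zero, zero_add, add_zero]
  have hres1 : (g1 * (a + d)) • b 2 = (-a') • b 2 := by
    have h := hD (b 1)
    rw [hpow1, pow_one, LieAlgebra.ad_apply, hD1, map_smul, hD2] at h
    rw [smul_smul] at h
    rw [h]
    simp only [lie_add, lie_smul, lie_self, hyx, hyz, smul_zero, zero_add, add_zero,
      smul_neg, neg_smul]
  -- trace is nilpotent hence zero
  have htr : ∀ k : ℕ, (D.toLinearMap ^ k) (b 2) = (a + d) ^ k • b 2 := by
    intro k
    induction k with
    | zero => simp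
    | succ k ih =>
      rw [pow_succ', Module.End.mul_apply, ih, map_smul]
      have : D.toLinearMap (b 2) = (a + d) • b 2 := hD2
      rw [this, smul_smul, ← pow_succ]
  have had : a + d = 0 := by
    have h := htr n
    rw [hDn, LinearMap.zero_apply] at h
    have := hb2z _ h.symm
    exact pow_eq_zero_iff hn.ne' |>.mp this
  have hc0 : c = 0 := by
    have := hb2 _ _ hres0
    rw [had, mul_zero] at this
    exact this.symm
  have ha'0 : a' = 0 := by
    have := hb2 _ _ hres1
    rw [had, mul_zero] at this
    exact neg_eq_zero.mp this.symm
  have hda : d = a := by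
    have h1 : d = -a := by linear_combination had
    rw [h1, CharTwo.neg_eq]
  -- a is nilpotent hence zero
  have hiter : ∀ k : ℕ, ∃ t : F, (D.toLinearMap ^ k) (b 0) = a ^ k • b 0 + t • b 2 := by
    intro k
    induction k with
    | zero => exact ⟨0, by simp⟩
    | succ k ih =>
      obtain ⟨t, ht⟩ := ih
      refine ⟨a ^ k * e, ?_⟩
      rw [pow_succ', Module.End.mul_apply, ht, map_add, map_smul, map_smul]
      have h2 : D.toLinearMap (b 2) = 0 := by
        show D (b 2) = 0
        rw [hD2, had, zero_smul]
      have h0 : D.toLinearMap (b 0) = a • b 0 + e • b 2 := by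
        show D (b 0) = _
        rw [hD0, hc0, zero_smul, add_zero]
      rw [h0, h2, smul_zero, add_zero, smul_add, smul_smul, smul_smul, ← pow_succ]
  have ha0 : a = 0 := by
    obtain ⟨t, ht⟩ := hiter n
    rw [hDn, LinearMap.zero_apply] at ht
    have h : a ^ n = 0 := by
      have h0 := congrArg (fun v => b.repr v 0) ht
      simpa [Finsupp.single_apply, show ¬ (2 : Fin 3) = 0 by decide] using h0.symm
    exact pow_eq_zero_iff hn.ne' |>.mp h
  have hd0 : d = 0 := by rw [hda, ha0]
  -- conclude
  refine ⟨f • b 0 + e • b 1, ?_⟩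
  have hlin : D.toLinearMap = LieAlgebra.ad F L (f • b 0 + e • b 1) := by
    apply b.ext
    intro i
    fin_cases i
    · show D (b 0) = ⁅f • b 0 + e • b 1, b 0⁆
      rw [hD0, ha0, hc0, zero_smul, zero_smul, zero_add, zero_add]
      rw [add_lie, smul_lie, smul_lie, lie_self, smul_zero, zero_add, hyx, smul_neg,
        ← neg_smul, CharTwo.neg_eq]
    · show D (b 1) = ⁅f • b 0 + e • b 1, b 1⁆
      rw [hD1, ha'0, hd0, zero_smul, zero_smul, zero_add, zero_add]
      rw [add_lie, smul_lie, smul_lie, lie_self, smul_zero, add_zero, hxy]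
    · show D (b 2) = ⁅f • b 0 + e • b 1, b 2⁆
      rw [hD2, had, zero_smul, add_lie, smul_lie, smul_lie, hxz, hyz, smul_zero,
        smul_zero, add_zero]
  intro x
  have := LinearMap.congr_fun hlin x
  rw [LieAlgebra.ad_apply] at this
  exact this
end

section
/- Let F be a field of characteristic 2 and let L = h_1(F) be the three-dimensional Heisenberg algebra over F, equipped with any p-mapping making L a restricted Lie algebra. Let D be a linear transformation of L vanishing on the center Z(L) and inducing the identity transformation on L/Z(L) (i.e., D(u) − u ∈ Z(L) for all u ∈ L). Then D is an outer restricted derivation of h_1(F). -/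
open UniversalEnvelopingAlgebra

/-- **Remark.** Let `L = h₁(F)` be the three-dimensional Heisenberg algebra over a field `F`
of characteristic `2`, equipped with any `p`-mapping. Any linear transformation `D` of `L`
vanishing on the center and inducing the identity on `L/Z(L)` is an outer restricted
derivation of `L`. -/
theorem heisenberg_outer_restricted_derivation
    (F L : Type*) [Field F] [CharP F 2]
    [LieRing L] [LieAlgebra F L] (b : Module.Basis (Fin 3) F L)
    (hxy : ⁅b 0, b 1⁆ = b 2) (hxz : ⁅b 0, b 2⁆ = 0) (hyz : ⁅b 1, b 2⁆ = 0)
    (P : PMapping 2 F L) (D : L →ₗ[F] L)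
    (hcenter : ∀ u : L, (∀ v : L, ⁅u, v⁆ = 0) → D u = 0)
    (hid : ∀ u v : L, ⁅D u - u, v⁆ = 0) :
    ∃ D' : LieDerivation F L L, (⇑D' = ⇑D) ∧ P.IsRestrictedDer D' ∧
      ¬ PMapping.IsInnerDer D' := by

  classical
  -- basic facts
  have hrep : ∀ u : L, u = b.repr u 0 • b 0 + b.repr u 1 • b 1 + b.repr u 2 • b 2 := by
    intro u
    have h := b.sum_repr u
    rw [Fin.sum_univ_three] at h
    exact h.symm
  have hyx : ⁅b 1, b 0⁆ = -b 2 := by rw [← lie_skew, hxy]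
  have hzx : ⁅b 2, b 0⁆ = 0 := by rw [← lie_skew, hxz, neg_zero]
  have hzy : ⁅b 2, b 1⁆ = 0 := by rw [← lie_skew, hyz, neg_zero]
  -- bracket formula
  have hbr : ∀ u v : L, ⁅u, v⁆ =
      (b.repr u 0 * b.repr v 1 - b.repr u 1 * b.repr v 0) • b 2 := by
    intro u v
    conv_lhs => rw [hrep u, hrep v]
    simp only [add_lie, lie_add, smul_lie, lie_smul, lie_self, hxy, hxz, hyz, hyx, hzx, hzy,
      smul_zero, smul_neg, add_zero, zero_add, sub_smul, mul_smul]
    module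
  have hbne : (b 2 : L) ≠ 0 := b.ne_zero 2
  -- characterization of central elements
  have hc01 : ∀ u : L, (∀ v : L, ⁅u, v⁆ = 0) → b.repr u 0 = 0 ∧ b.repr u 1 = 0 := by
    intro u hu
    constructor
    · have h := hu (b 1)
      rw [hbr] at h
      simp only [Module.Basis.repr_self, Finsupp.single_apply] at h
      norm_num at h
      rcases h with h | h
      · exact h
      · exact absurd h hbne
    · have h := hu (b 0)
      rw [hbr] at h
      simp only [Module.Basis.repr_self, Finsupp.single_apply] at h
      norm_num at h
      rcases h with h | h
      · exact h
      · exact absurd h hbne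
  -- b 2 is central
  have hz_central : ∀ v : L, ⁅b 2, v⁆ = 0 := by
    intro v
    rw [hbr]
    simp [Finsupp.single_apply]
  -- D kills brackets
  have hDbr : ∀ u v : L, D ⁅u, v⁆ = 0 := by
    intro u v
    rw [hbr, map_smul, hcenter (b 2) hz_central, smul_zero]
  -- moving D inside brackets
  have hmove : ∀ u v : L, ⁅u, D v⁆ = ⁅u, v⁆ := by
    intro u v
    have h1 : ⁅u, D v - v⁆ = 0 := by
      rw [← neg_zero, ← hid v u, lie_skew]
    have h2 : ⁅u, D v⁆ - ⁅u, v⁆ = 0 := by rwa [← lie_sub]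
    exact sub_eq_zero.mp h2
  have htwo : (2 : F) = 0 := by
    have := CharP.cast_eq_zero F 2
    exact_mod_cast this
  -- D is a derivation
  have hleib : ∀ a c : L, D ⁅a, c⁆ = ⁅a, D c⁆ - ⁅c, D a⁆ := by
    intro a c
    rw [hDbr, hmove, hmove]
    rw [← lie_skew c a, sub_neg_eq_add]
    have : ⁅a, c⁆ + ⁅a, c⁆ = (2 : F) • ⁅a, c⁆ := by
      rw [two_smul]
    rw [this, htwo, zero_smul]
  refine ⟨⟨D, hleib⟩, rfl, ?_, ?_⟩
  · -- restricted
    intro x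
    show D (P.pow x) = ((LieAlgebra.ad F L x) ^ (2 - 1)) (D x)
    have hpowc : ∀ v : L, ⁅P.pow x, v⁆ = 0 := by
      intro v
      have had := P.ad_pow x
      have h := congrFun (congrArg (fun f : L →ₗ[F] L => (f : L → L)) had) v
      simp only [pow_two, Module.End.mul_apply, LieAlgebra.ad_apply] at h
      rw [hbr x v] at h
      have h2 : ⁅x, (b.repr x 0 * b.repr v 1 - b.repr x 1 * b.repr v 0) • b 2⁆ = 0 := by
        rw [lie_smul, ← lie_skew, hz_central, neg_zero, smul_zero]
      show (LieAlgebra.ad F L (P.pow x)) v = 0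
      rw [LieAlgebra.ad_apply, h, h2]
    rw [hcenter _ hpowc]
    show (0 : L) = ((LieAlgebra.ad F L x) ^ 1) (D x)
    rw [pow_one, LieAlgebra.ad_apply, hmove, lie_self]
  · -- outer
    rintro ⟨a, ha⟩
    have h1 : D (b 0) = ⁅a, b 0⁆ := ha (b 0)
    have h2 : b.repr (D (b 0) - b 0) 0 = 0 :=
      (hc01 _ (fun v => hid (b 0) v)).1
    rw [map_sub, Finsupp.sub_apply, h1, hbr] at h2
    simp only [map_smul, Finsupp.smul_apply, Module.Basis.repr_self, Finsupp.single_apply] at h2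
    rw [if_neg (show ¬((2 : Fin 3) = 0) by decide)] at h2
    norm_num at h2
end

section
/- Let F be a field of characteristic p > 0 and let L be the direct product of a two-dimensional non-abelian restricted Lie algebra over F and a one-dimensional torus over F. Then every restricted derivation of L is inner; in particular, L is a non-toral solvable restricted Lie algebra with non-zero center having no outer restricted derivations. -/
open UniversalEnvelopingAlgebra

/-- **Remark.** Let `L` be the direct product of a two-dimensional non-abelian restricted Lie
algebra and a one-dimensional torus over a field of characteristic `p > 0` (realized by a
basis `e, f, t` with `⁅e,f⁆ = f`, `t` central, the two factors closed under the `p`-mapping,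
and every element of the second factor semisimple). Then every restricted derivation of `L`
is inner; in particular `L` is a non-toral solvable restricted Lie algebra with non-zero
center having no outer restricted derivations. -/
theorem direct_product_no_outer_restricted_derivation
    (p : ℕ) (F L : Type*) [Field F] [CharP F p] (hp : 0 < p)
    [LieRing L] [LieAlgebra F L] (b : Module.Basis (Fin 3) F L)
    (hef : ⁅b 0, b 1⁆ = b 1) (het : ⁅b 0, b 2⁆ = 0) (hft : ⁅b 1, b 2⁆ = 0)
    (P : PMapping p F L)
    (hS : ∀ x ∈ Submodule.span F {b 0, b 1}, P.pow x ∈ Submodule.span F {b 0, b 1})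
    (hT : ∀ x ∈ Submodule.span F ({b 2} : Set L),
      P.pow x ∈ Submodule.span F ({b 2} : Set L) ∧ P.IsSemisimpleElt x) :
    (∀ D : LieDerivation F L L, P.IsRestrictedDer D → PMapping.IsInnerDer D) ∧
      ¬ P.IsTorus ∧ LieAlgebra.IsSolvable L ∧
      (∃ z : L, z ≠ 0 ∧ ∀ x : L, ⁅z, x⁆ = 0) := by
  classical
  have hprime : p.Prime := by
    rcases CharP.char_is_prime_or_zero F p with h | h
    · exact h
    · omega
  have hp2 : 2 ≤ p := hprime.two_le
  -- basic bracket relations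
  have hfe : ⁅b 1, b 0⁆ = -b 1 := by rw [← lie_skew, hef]
  have hte : ⁅b 2, b 0⁆ = 0 := by rw [← lie_skew, het, neg_zero]
  have htf : ⁅b 2, b 1⁆ = 0 := by rw [← lie_skew, hft, neg_zero]
  have hx : ∀ x : L, x = b.repr x 0 • b 0 + b.repr x 1 • b 1 + b.repr x 2 • b 2 := by
    intro x
    have h := b.sum_repr x
    rw [Fin.sum_univ_three] at h
    exact h.symm
  -- the fundamental bracket formula
  have hbr : ∀ x y : L, ⁅x, y⁆ = (b.repr x 0 * b.repr y 1 - b.repr x 1 * b.repr y 0) • b 1 := by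
    intro x y
    conv_lhs => rw [hx x, hx y]
    simp only [add_lie, lie_add, smul_lie, lie_smul, hef, het, hft, hfe, hte, htf,
      lie_self, smul_zero, add_zero, zero_add, smul_neg, smul_smul]
    module
  have hb1ne : b 2 ∉ Submodule.span F ({b 0, b 1} : Set L) := by
    have h : ({b 0, b 1} : Set L) = b '' {0, 1} := by simp [Set.image_insert_eq]
    rw [h, Module.Basis.self_mem_span_image]
    decide
  have hb2ne : b 1 ∉ Submodule.span F ({b 2} : Set L) := by
    have h : ({b 2} : Set L) = b '' {2} := by simp
    rw [h, Module.Basis.self_mem_span_image]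
    decide
  -- central elements are multiples of b 2
  have hcent : ∀ z : L, (∀ x : L, ⁅z, x⁆ = 0) → z = b.repr z 2 • b 2 := by
    intro z hz
    have h0 : b.repr z 0 = 0 := by
      have h := hz (b 1)
      rw [hbr] at h
      simp only [Module.Basis.repr_self, Finsupp.single_eq_same, mul_one,
        Finsupp.single_apply, if_neg (by decide : ¬ ((1:Fin 3) = 0)), mul_zero, sub_zero] at h
      rcases smul_eq_zero.mp h with h | h
      · exact h
      · exact absurd h (b.ne_zero 1)
    have h1 : b.repr z 1 = 0 := by
      have h := hz (b 0)
      rw [hbr] at h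
      simp only [Module.Basis.repr_self, Finsupp.single_eq_same, mul_one,
        Finsupp.single_apply, if_neg (by decide : ¬ ((0:Fin 3) = 1)), mul_zero, zero_sub] at h
      rcases smul_eq_zero.mp h with h | h
      · exact neg_eq_zero.mp h
      · exact absurd h (b.ne_zero 1)
    conv_lhs => rw [hx z]
    rw [h0, h1, zero_smul, zero_smul, zero_add, zero_add]
  -- ad (b 0) is idempotent
  have hade : (LieAlgebra.ad F L (b 0)) ^ 2 = LieAlgebra.ad F L (b 0) := by
    apply b.ext
    intro i
    fin_cases i <;>
      simp [pow_succ, Module.End.mul_apply, LieAlgebra.ad_apply, hef, het]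
  -- b 2 is central
  have htcent : ∀ x : L, ⁅b 2, x⁆ = 0 := by
    intro x
    rw [hbr]
    simp [Finsupp.single_apply]
  -- P.pow (b 1) = 0
  have hpf0 : P.pow (b 1) = 0 := by
    have hf2 : (LieAlgebra.ad F L (b 1)) ^ 2 = 0 := by
      apply b.ext
      intro i
      fin_cases i <;>
        simp [pow_succ, Module.End.mul_apply, LieAlgebra.ad_apply, hef, hfe, hft]
    have hfp : (LieAlgebra.ad F L (b 1)) ^ p = 0 := by
      obtain ⟨k, rfl⟩ : ∃ k, p = k + 2 := ⟨p - 2, by omega⟩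
      rw [pow_add, hf2, mul_zero]
    have hc : ∀ x : L, ⁅P.pow (b 1), x⁆ = 0 := by
      intro x
      have := congrArg (fun f : Module.End F L => f x) ((P.ad_pow (b 1)).trans hfp)
      simpa [LieAlgebra.ad_apply] using this
    have h2 : P.pow (b 1) = b.repr (P.pow (b 1)) 2 • b 2 := hcent _ hc
    have hmem : P.pow (b 1) ∈ Submodule.span F ({b 0, b 1} : Set L) :=
      hS _ (Submodule.subset_span (by simp))
    obtain ⟨γ, hγeq⟩ : ∃ γ : F, P.pow (b 1) = γ • b 2 := ⟨_, h2⟩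
    by_cases hγ : γ = 0
    · rw [hγeq, hγ, zero_smul]
    · exfalso
      apply hb1ne
      have hb2 : b 2 = γ⁻¹ • P.pow (b 1) := by
        rw [hγeq, smul_smul, inv_mul_cancel₀ hγ, one_smul]
      rw [hb2]
      exact Submodule.smul_mem _ _ hmem
  -- Lie subalgebra on span {b 0, b 1}
  let KS : LieSubalgebra F L :=
    { Submodule.span F ({b 0, b 1} : Set L) with
      lie_mem' := fun {x y} _ _ => by
        rw [hbr x y]
        exact Submodule.smul_mem _ _ (Submodule.subset_span (by simp)) }
  have hKSmem : ∀ x : L, x ∈ KS ↔ x ∈ Submodule.span F ({b 0, b 1} : Set L) := fun _ => Iff.rfl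
  -- Lie subalgebra on span {b 2}
  let KT : LieSubalgebra F L :=
    { Submodule.span F ({b 2} : Set L) with
      lie_mem' := fun {x y} hx' _ => by
        rcases Submodule.mem_span_singleton.mp hx' with ⟨a, rfl⟩
        rw [smul_lie, htcent, smul_zero]
        exact Submodule.zero_mem _ }
  -- P.pow (b 0) = b 0 + γ • b 2 for some γ
  have hadp : (LieAlgebra.ad F L (b 0)) ^ p = LieAlgebra.ad F L (b 0) := by
    obtain ⟨k, rfl⟩ : ∃ k, p = k + 1 := ⟨p - 1, by omega⟩
    exact IsIdempotentElem.pow_succ_eq k hade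
  have hadp1 : (LieAlgebra.ad F L (b 0)) ^ (p - 1) = LieAlgebra.ad F L (b 0) := by
    obtain ⟨k, hk⟩ : ∃ k, p - 1 = k + 1 := ⟨p - 2, by omega⟩
    rw [hk]
    exact IsIdempotentElem.pow_succ_eq k hade
  have hpe : ∃ γ : F, P.pow (b 0) = b 0 + γ • b 2 := by
    have hc : ∀ x : L, ⁅P.pow (b 0) - b 0, x⁆ = 0 := by
      intro x
      have := congrArg (fun f : Module.End F L => f x) ((P.ad_pow (b 0)).trans hadp)
      simp only [LieAlgebra.ad_apply] at this
      rw [sub_lie, this, sub_self]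
    have h2 := hcent _ hc
    exact ⟨b.repr (P.pow (b 0) - b 0) 2, by rw [← h2]; abel⟩
  -- ad (b 2) = 0
  have hadt : LieAlgebra.ad F L (b 2) = 0 := by
    apply LinearMap.ext
    intro x
    simp [LieAlgebra.ad_apply, htcent x]
  -- D (b 2) = 0 for every restricted derivation D
  refine ⟨?_, ?_, ?_, ?_⟩
  · -- every restricted derivation is inner
    intro D hD
    have hDt : D (b 2) = 0 := by
      have hR := hD (b 2)
      rw [hadt, zero_pow (by omega : p - 1 ≠ 0), LinearMap.zero_apply] at hR
      obtain ⟨hmem, _⟩ := hT (b 2) (Submodule.mem_span_singleton_self _)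
      rcases Submodule.mem_span_singleton.mp hmem with ⟨a, ha⟩
      by_cases ha0 : a = 0
      · -- then P.pow (b 2) = 0 and b 2 semisimple gives contradiction
        exfalso
        obtain ⟨_, hss⟩ := hT (b 2) (Submodule.mem_span_singleton_self _)
        have hb2KS : b 2 ∈ KS := by
          apply hss KS
          · intro z hz
            rcases hz with rfl
            rw [← ha, ha0, zero_smul]
            exact Submodule.zero_mem _
          · intro y hy
            exact hS y hy
        exact hb1ne hb2KS
      · have : D (P.pow (b 2)) = a • D (b 2) := by rw [← ha, map_smul]
        rw [hR] at this
        exact (smul_eq_zero.mp this.symm).resolve_left ha0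
    have hDe : D (b 0) = b.repr (D (b 0)) 1 • b 1 := by
      have hR := hD (b 0)
      obtain ⟨γ, hγ⟩ := hpe
      rw [hγ, map_add, map_smul, hDt, smul_zero, add_zero, hadp1, LieAlgebra.ad_apply,
        hbr (b 0) (D (b 0))] at hR
      simp only [Module.Basis.repr_self, Finsupp.single_eq_same, one_mul,
        Finsupp.single_apply, if_neg (by decide : ¬ ((0:Fin 3) = 1)), zero_mul, sub_zero] at hR
      exact hR
    have hDf : D (b 1) = b.repr (D (b 1)) 1 • b 1 := by
      -- from derivation identity on ⁅b 0, b 1⁆ = b 1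
      have h := D.apply_lie_eq_add (b 0) (b 1)
      rw [hef, hbr (D (b 0)) (b 1), hbr (b 0) (D (b 1))] at h
      simp only [Module.Basis.repr_self, Finsupp.single_eq_same, mul_one, one_mul,
        Finsupp.single_apply, if_neg (by decide : ¬ ((1:Fin 3) = 0)),
        if_neg (by decide : ¬ ((0:Fin 3) = 1)), mul_zero, zero_mul, sub_zero, add_zero] at h
      -- h : D (b 1) = repr (D b0) 0 • b 1 + repr (b0)?? ...
      -- extract coefficient: repr (D b0) 0 = 0 since D b0 = c • b 1
      have h0 : b.repr (D (b 0)) 0 = 0 := by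
        rw [hDe]
        simp [Finsupp.single_apply]
      rw [h0] at h
      simpa using h
    set c0 := b.repr (D (b 0)) 1 with hc0
    set c1 := b.repr (D (b 1)) 1 with hc1
    refine ⟨c1 • b 0 - c0 • b 1, ?_⟩
    intro x
    conv_lhs => rw [hx x]
    conv_rhs => rw [hx x]
    rw [map_add, map_add, map_smul, map_smul, map_smul, hDt, hDe, hDf]
    simp only [lie_add, add_lie, lie_smul, smul_lie, sub_lie, hef, het, hft, hfe, hte, htf,
      lie_self, smul_zero, add_zero, zero_add, smul_neg, smul_smul, neg_smul,
      zero_smul, smul_add]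
    module
  · -- not a torus
    intro hTor
    have hss := hTor (b 1)
    have : b 1 ∈ KT := by
      apply hss KT
      · intro z hz
        rcases hz with rfl
        rw [hpf0]
        exact Submodule.zero_mem _
      · intro y hy
        exact (hT y hy).1
    exact hb2ne this
  · -- solvable
    let I : LieIdeal F L :=
      { Submodule.span F ({b 1} : Set L) with
        lie_mem := fun {x m} _ => by
          rw [hbr x m]
          exact Submodule.smul_mem _ _ (Submodule.mem_span_singleton_self _) }
    have h1 : LieAlgebra.derivedSeries F L 1 ≤ I := by
      rw [LieAlgebra.derivedSeries_def, LieAlgebra.derivedSeriesOfIdeal_succ,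
        LieAlgebra.derivedSeriesOfIdeal_zero]
      rw [LieSubmodule.lie_le_iff]
      intro x _ m _
      show ⁅(x : L), m⁆ ∈ Submodule.span F ({b 1} : Set L)
      rw [hbr]
      exact Submodule.smul_mem _ _ (Submodule.mem_span_singleton_self _)
    have h2 : LieAlgebra.derivedSeries F L 2 = ⊥ := by
      rw [show (2 : ℕ) = 1 + 1 from rfl, LieAlgebra.derivedSeries_def,
        LieAlgebra.derivedSeriesOfIdeal_succ, ← LieAlgebra.derivedSeries_def]
      apply le_bot_iff.mp
      refine le_trans (LieSubmodule.mono_lie h1 h1) (le_of_eq ?_)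
      rw [LieSubmodule.lie_eq_bot_iff]
      intro x hxI m hmI
      have hx' : (x : L) ∈ Submodule.span F ({b 1} : Set L) := hxI
      have hm' : m ∈ Submodule.span F ({b 1} : Set L) := hmI
      rcases Submodule.mem_span_singleton.mp hx' with ⟨a, ha⟩
      rcases Submodule.mem_span_singleton.mp hm' with ⟨c, hc⟩
      rw [← ha, ← hc, smul_lie, lie_smul, lie_self, smul_zero, smul_zero]
    exact LieAlgebra.IsSolvable.mk (R := F) h2
  · exact ⟨b 2, b.ne_zero 2, htcent⟩
end
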